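/- arXiv:2602.02087 — 3 statements merged into one kernel-verified Lean document; each statement's English description precedes it below -/
import Mathlib

section
/- Let B ∈ R^{d×d} be an invertible matrix whose columns b_1,...,b_d form a C-approximate barycentric spanner of a set A ⊆ R^d, i.e., every M ∈ A can be written M = Bα with ‖α‖_∞ ≤ C. Then for every M ∈ A, the matrix inequality M Mᵀ ⪯ d C² B Bᵀ holds (in the Loewner order). -/
open Matrix

/-- If the columns of the invertible matrix `B` form a `C`-approximate
barycentric spanner of `A`, then for every `M ∈ A` we have
`M Mᵀ ⪯ d C² B Bᵀ` in the Loewner order. -/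
theorem stmt3 {d : ℕ} (A : Set (Fin d → ℝ)) (B : Matrix (Fin d) (Fin d) ℝ)
    (hB : IsUnit B) (hcols : ∀ j : Fin d, (fun i => B i j) ∈ A)
    (C : ℝ) (hC : 1 < C)
    (hspan : ∀ M ∈ A, ∃ α : Fin d → ℝ, M = B.mulVec α ∧ ∀ i, |α i| ≤ C) :
    ∀ M ∈ A, (((d : ℝ) * C ^ 2) • (B * Bᵀ) - vecMulVec M M).PosSemidef := by
  intro M hM
  obtain ⟨α, hMα, hα⟩ := hspan M hM
  rw [Matrix.posSemidef_iff_dotProduct_mulVec]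
  constructor
  · unfold Matrix.IsHermitian
    ext i j
    simp [Matrix.sub_apply, Matrix.smul_apply, Matrix.mul_apply, Matrix.vecMulVec_apply,
      Matrix.transpose_apply, mul_comm]
  · intro x
    have hx : star x = x := by ext i; simp
    rw [hx]
    set y : Fin d → ℝ := Bᵀ.mulVec x with hy
    have h1 : x ⬝ᵥ ((B * Bᵀ) *ᵥ x) = y ⬝ᵥ y := by
      rw [← Matrix.mulVec_mulVec, Matrix.dotProduct_mulVec, ← Matrix.mulVec_transpose]
    have h2 : x ⬝ᵥ (vecMulVec M M *ᵥ x) = (α ⬝ᵥ y) ^ 2 := by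
      have hMx : M ⬝ᵥ x = α ⬝ᵥ y := by
        rw [hMα, dotProduct_comm, Matrix.dotProduct_mulVec, ← Matrix.mulVec_transpose,
          dotProduct_comm]
      have : vecMulVec M M *ᵥ x = (M ⬝ᵥ x) • M := by
        ext i
        simp only [Matrix.mulVec, Matrix.vecMulVec_apply, dotProduct, Pi.smul_apply, smul_eq_mul]
        rw [Finset.sum_mul]
        exact Finset.sum_congr rfl fun j _ => by ring
      rw [this, dotProduct_smul, hMx, dotProduct_comm x M, hMx, sq, smul_eq_mul]
    have hCS : (α ⬝ᵥ y) ^ 2 ≤ (∑ i, α i ^ 2) * (∑ i, y i ^ 2) := by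
      simpa [dotProduct] using Finset.sum_mul_sq_le_sq_mul_sq Finset.univ α y
    have hαsum : (∑ i, α i ^ 2) ≤ (d : ℝ) * C ^ 2 := by
      calc (∑ i : Fin d, α i ^ 2) ≤ ∑ i : Fin d, C ^ 2 := by
            apply Finset.sum_le_sum
            intro i _
            have := hα i
            nlinarith [abs_nonneg (α i), sq_abs (α i), neg_abs_le (α i), le_abs_self (α i)]
        _ = (d : ℝ) * C ^ 2 := by simp [Finset.sum_const, mul_comm]
    have hyy : y ⬝ᵥ y = ∑ i, y i ^ 2 := by simp [dotProduct, sq]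
    have hynn : (0:ℝ) ≤ ∑ i, y i ^ 2 := Finset.sum_nonneg fun i _ => sq_nonneg _
    rw [Matrix.sub_mulVec, dotProduct_sub, Matrix.smul_mulVec,
      dotProduct_smul, h1, h2, hyy, smul_eq_mul]
    nlinarith [mul_le_mul_of_nonneg_right hαsum hynn]
end

section
/- Let B ∈ R^{d×d} be invertible whose columns form a C-approximate barycentric spanner of A ⊆ R^d, and let B̃ = (1/d) B Bᵀ be the co-occurrence matrix of the uniform distribution over the spanner columns. Suppose there exists a probability distribution p' on A whose co-occurrence matrix Σ' = E_{M∼p'}[M Mᵀ] has minimum eigenvalue at least 1/d. Then the minimum eigenvalue of B̃ is at least 1/(C² d³). -/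
open Matrix Finset

/-- If the columns of `B` form a `C`-approximate barycentric spanner of `A`
and some distribution over `A` has co-occurrence matrix with minimum
eigenvalue at least `1/d`, then the co-occurrence matrix
`B̃ = (1/d) B Bᵀ` of the uniform distribution over the spanner columns has
minimum eigenvalue at least `1/(C² d³)`. -/
theorem stmt4 {d : ℕ} (hd : 0 < d) (A : Finset (Fin d → ℝ))
    (B : Matrix (Fin d) (Fin d) ℝ) (hB : IsUnit B)
    (hcols : ∀ j : Fin d, (fun i => B i j) ∈ A)
    (C : ℝ) (hC : 1 < C)
    (hspan : ∀ M ∈ A, ∃ α : Fin d → ℝ, M = B.mulVec α ∧ ∀ i, |α i| ≤ C)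
    (Btil : Matrix (Fin d) (Fin d) ℝ) (hBtil : Btil = (d : ℝ)⁻¹ • (B * Bᵀ))
    (p' : (Fin d → ℝ) → ℝ) (hp0 : ∀ M ∈ A, 0 ≤ p' M) (hp1 : ∑ M ∈ A, p' M = 1)
    (hmin : ∀ u : Fin d → ℝ,
      (1 / (d : ℝ)) * (u ⬝ᵥ u) ≤ u ⬝ᵥ (∑ M ∈ A, p' M • vecMulVec M M).mulVec u) :
    ∀ u : Fin d → ℝ, (1 / (C ^ 2 * (d : ℝ) ^ 3)) * (u ⬝ᵥ u) ≤ u ⬝ᵥ Btil.mulVec u := by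
  intro u
  set v : Fin d → ℝ := Bᵀ.mulVec u with hv
  have hdpos : (0:ℝ) < d := by exact_mod_cast hd
  have hCpos : (0:ℝ) < C := lt_trans one_pos hC
  -- value of the quadratic form of Btil
  have hBtilq : u ⬝ᵥ Btil.mulVec u = (d : ℝ)⁻¹ * (v ⬝ᵥ v) := by
    rw [hBtil]
    have : (B * Bᵀ).mulVec u = B.mulVec v := by
      rw [hv, ← Matrix.mulVec_mulVec]
    rw [Matrix.smul_mulVec, this, dotProduct_smul,
      Matrix.dotProduct_mulVec, ← Matrix.mulVec_transpose, ← hv]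
    simp [smul_eq_mul]
  -- the quadratic form of the co-occurrence matrix as a sum
  have hq : u ⬝ᵥ (∑ M ∈ A, p' M • vecMulVec M M).mulVec u
      = ∑ M ∈ A, p' M * (u ⬝ᵥ M) ^ 2 := by
    have h1 : (∑ M ∈ A, p' M • vecMulVec M M).mulVec u
        = ∑ M ∈ A, ((p' M • vecMulVec M M).mulVec u) := by
      funext i
      simp only [Matrix.mulVec, dotProduct, Finset.sum_apply,
        Matrix.sum_apply, Matrix.smul_apply, Finset.sum_mul]
      exact Finset.sum_comm
    have h2 : u ⬝ᵥ (∑ M ∈ A, ((p' M • vecMulVec M M).mulVec u))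
        = ∑ M ∈ A, u ⬝ᵥ ((p' M • vecMulVec M M).mulVec u) := by
      simp only [dotProduct, Finset.sum_apply, Finset.mul_sum]
      exact Finset.sum_comm
    rw [h1, h2]
    refine Finset.sum_congr rfl fun M _ => ?_
    have h3 : vecMulVec M M *ᵥ u = (M ⬝ᵥ u) • M := by
      funext i
      simp [Matrix.mulVec, Matrix.vecMulVec_apply, dotProduct,
        Finset.mul_sum, mul_comm, mul_assoc]
      exact Finset.sum_congr rfl fun j _ => by ring
    rw [Matrix.smul_mulVec, dotProduct_smul, h3,
      dotProduct_smul, smul_eq_mul, smul_eq_mul,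
      dotProduct_comm M u]
    ring
  -- bound each term
  have key : ∀ M ∈ A, (u ⬝ᵥ M) ^ 2 ≤ C ^ 2 * d * (v ⬝ᵥ v) := by
    intro M hM
    obtain ⟨α, hMα, hα⟩ := hspan M hM
    have h1 : u ⬝ᵥ M = v ⬝ᵥ α := by
      rw [hMα, Matrix.dotProduct_mulVec, hv, Matrix.mulVec_transpose]
    have h2 : |v ⬝ᵥ α| ≤ C * ∑ i, |v i| := by
      calc |v ⬝ᵥ α| ≤ ∑ i, |v i * α i| := Finset.abs_sum_le_sum_abs _ _
        _ ≤ ∑ i, |v i| * C := by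
            refine Finset.sum_le_sum fun i _ => ?_
            rw [abs_mul]
            exact mul_le_mul_of_nonneg_left (hα i) (abs_nonneg _)
        _ = C * ∑ i, |v i| := by rw [← Finset.sum_mul]; ring
    have h3 : (∑ i, |v i|) ^ 2 ≤ (d : ℝ) * ∑ i, v i ^ 2 := by
      have := sq_sum_le_card_mul_sum_sq (s := (Finset.univ : Finset (Fin d)))
        (f := fun i => |v i|)
      simpa [sq_abs] using this
    have habs : (u ⬝ᵥ M) ^ 2 = |v ⬝ᵥ α| ^ 2 := by rw [h1, sq_abs]
    have hvv : v ⬝ᵥ v = ∑ i, v i ^ 2 := by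
      simp [dotProduct, sq]
    rw [habs, hvv]
    calc |v ⬝ᵥ α| ^ 2 ≤ (C * ∑ i, |v i|) ^ 2 := by
          apply sq_le_sq' _ h2
          linarith [abs_nonneg (v ⬝ᵥ α), h2]
      _ = C ^ 2 * (∑ i, |v i|) ^ 2 := by ring
      _ ≤ C ^ 2 * ((d : ℝ) * ∑ i, v i ^ 2) := by
          exact mul_le_mul_of_nonneg_left h3 (by positivity)
      _ = C ^ 2 * d * ∑ i, v i ^ 2 := by ring
  -- sum the bound
  have hsum : u ⬝ᵥ (∑ M ∈ A, p' M • vecMulVec M M).mulVec u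
      ≤ C ^ 2 * d * (v ⬝ᵥ v) := by
    rw [hq]
    calc ∑ M ∈ A, p' M * (u ⬝ᵥ M) ^ 2
        ≤ ∑ M ∈ A, p' M * (C ^ 2 * d * (v ⬝ᵥ v)) :=
          Finset.sum_le_sum fun M hM =>
            mul_le_mul_of_nonneg_left (key M hM) (hp0 M hM)
      _ = C ^ 2 * d * (v ⬝ᵥ v) := by rw [← Finset.sum_mul, hp1, one_mul]
  have hmain : (1 / (d : ℝ)) * (u ⬝ᵥ u) ≤ C ^ 2 * d * (v ⬝ᵥ v) :=
    le_trans (hmin u) hsum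
  rw [hBtilq]
  rw [div_mul_eq_mul_div, one_mul, div_le_iff₀ (by positivity)]
  have hvv0 : 0 ≤ v ⬝ᵥ v := Finset.sum_nonneg fun i _ => mul_self_nonneg (v i)
  have h4 : u ⬝ᵥ u ≤ C ^ 2 * (d:ℝ) ^ 2 * (v ⬝ᵥ v) := by
    have := mul_le_mul_of_nonneg_right hmain (le_of_lt hdpos)
    have e : 1 / (d:ℝ) * (u ⬝ᵥ u) * d = u ⬝ᵥ u := by field_simp
    nlinarith [this]
  have e2 : (d:ℝ)⁻¹ * (v ⬝ᵥ v) * (C ^ 2 * (d:ℝ) ^ 3) = C ^ 2 * (d:ℝ) ^ 2 * (v ⬝ᵥ v) := by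
    field_simp
  rw [e2]; exact h4
end

section
/- Let B ∈ R^{d×d} be invertible with columns of Euclidean norm at most √m forming a C-approximate barycentric spanner of A, and let B̃ = (1/d) B Bᵀ. Then sup_{M∈A} Mᵀ B̃^{-1} M ≤ C² d². -/
open Matrix

/-- If the columns of `B` (of Euclidean norm at most `√m`) form a
`C`-approximate barycentric spanner of `A` and `B̃ = (1/d) B Bᵀ`, then
`sup_{M∈A} Mᵀ B̃⁻¹ M ≤ C² d²`. -/
theorem stmt5 {d : ℕ} (A : Set (Fin d → ℝ)) (m : ℝ)
    (B : Matrix (Fin d) (Fin d) ℝ) (hB : IsUnit B)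
    (hcols : ∀ j : Fin d, (fun i => B i j) ∈ A)
    (hnorm : ∀ j : Fin d, ∑ i, (B i j) ^ 2 ≤ m)
    (C : ℝ) (hC : 1 < C)
    (hspan : ∀ M ∈ A, ∃ α : Fin d → ℝ, M = B.mulVec α ∧ ∀ i, |α i| ≤ C)
    (Btil : Matrix (Fin d) (Fin d) ℝ) (hBtil : Btil = (d : ℝ)⁻¹ • (B * Bᵀ)) :
    ∀ M ∈ A, M ⬝ᵥ Btil⁻¹.mulVec M ≤ C ^ 2 * (d : ℝ) ^ 2 := by
  intro M hM
  obtain ⟨α, hMeq, hα⟩ := hspan M hM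
  rcases Nat.eq_zero_or_pos d with hd | hd
  · subst hd
    simp [dotProduct]
  · have hdne : (d : ℝ) ≠ 0 := Nat.cast_ne_zero.mpr hd.ne'
    have hdet : IsUnit B.det := (Matrix.isUnit_iff_isUnit_det B).mp hB
    have hdetT : IsUnit Bᵀ.det := by rwa [Matrix.det_transpose]
    have hinv : Btil⁻¹ = (d : ℝ) • (Bᵀ⁻¹ * B⁻¹) := by
      apply Matrix.inv_eq_right_inv
      rw [hBtil]
      rw [Matrix.smul_mul, Matrix.mul_smul, smul_smul, inv_mul_cancel₀ hdne, one_smul]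
      calc B * Bᵀ * (Bᵀ⁻¹ * B⁻¹) = B * (Bᵀ * Bᵀ⁻¹) * B⁻¹ := by
            noncomm_ring
        _ = 1 := by rw [Matrix.mul_nonsing_inv _ hdetT, mul_one,
              Matrix.mul_nonsing_inv _ hdet]
    have key : M ⬝ᵥ Btil⁻¹.mulVec M = (d : ℝ) * (α ⬝ᵥ α) := by
      rw [hinv, hMeq, Matrix.smul_mulVec, dotProduct_smul]
      congr 1
      rw [Matrix.mulVec_mulVec, mul_assoc, Matrix.nonsing_inv_mul _ hdet, mul_one]
      rw [Matrix.dotProduct_mulVec, ← Matrix.vecMul_transpose,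
        Matrix.vecMul_vecMul, Matrix.mul_nonsing_inv _ hdetT, Matrix.vecMul_one]
    rw [key]
    have hsum : α ⬝ᵥ α ≤ (d : ℝ) * C ^ 2 := by
      rw [dotProduct]
      calc ∑ i, α i * α i ≤ ∑ _i : Fin d, C ^ 2 := by
            apply Finset.sum_le_sum
            intro i _
            have := hα i
            nlinarith [abs_nonneg (α i), sq_abs (α i)]
        _ = (d : ℝ) * C ^ 2 := by simp [mul_comm]
    have hd0 : (0:ℝ) ≤ (d:ℝ) := Nat.cast_nonneg d
    nlinarith
end
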